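/- Let V be a nonempty finite set, f a monotone nondecreasing submodular function from subsets of V to ℝ with f(∅) = 0, and k a positive integer. Let M_0 = ∅ and, for each i < k, let M_{i+1} = M_i ∪ {v_i} where v_i maximizes f(M_i ∪ {v}) over v ∈ V (i.e., f(M_i ∪ {v_i}) ≥ f(M_i ∪ {v}) for all v ∈ V). Then the greedy solution satisfies f(M_k) ≥ (1 − 1/e) · max{ f(O) : O ⊆ V, |O| ≤ k }. -/

import Mathlib

/-- The greedy algorithm, which at each of `k` steps adds a single element
maximizing the value of `f`, gives a `(1 − 1/e)`-approximation for maximizing a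
monotone nondecreasing submodular function `f` with `f ∅ = 0` subject to a
cardinality constraint `k`. -/
theorem stmt12 {V : Type*} [Fintype V] [DecidableEq V] [Nonempty V]
    (f : Finset V → ℝ)
    (hmono : ∀ A B : Finset V, A ⊆ B → f A ≤ f B)
    (hsub : ∀ A B : Finset V, A ⊆ B → ∀ v : V,
      f (insert v A) - f A ≥ f (insert v B) - f B)
    (hf0 : f ∅ = 0)
    (k : ℕ) (hk : 0 < k)
    (M : ℕ → Finset V) (hM0 : M 0 = ∅)
    (hgreedy : ∀ i < k, ∃ v : V, M (i + 1) = insert v (M i) ∧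
      ∀ w : V, f (insert w (M i)) ≤ f (insert v (M i))) :
    ∀ O : Finset V, O.card ≤ k → f (M k) ≥ (1 - 1 / Real.exp 1) * f O := by
  intro O hO
  have hkpos : (0:ℝ) < k := by exact_mod_cast hk
  have hO0 : 0 ≤ f O := by
    rw [← hf0]; exact hmono ∅ O (Finset.empty_subset O)
  -- submodularity summation lemma
  have key : ∀ A S : Finset V, f (A ∪ S) - f A ≤ ∑ v ∈ S, (f (insert v A) - f A) := by
    intro A S
    induction S using Finset.induction_on with
    | empty => simp
    | @insert w S hw ih =>
      rw [Finset.sum_insert hw, Finset.union_insert]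
      have h1 := hsub A (A ∪ S) Finset.subset_union_left w
      linarith
  -- per-step inequality
  have hstep : ∀ i < k, f O - f (M (i+1)) ≤ (1 - 1/(k:ℝ)) * (f O - f (M i)) := by
    intro i hi
    obtain ⟨v, hMv, hvmax⟩ := hgreedy i hi
    have hΔ : 0 ≤ f (M (i+1)) - f (M i) := by
      rw [hMv]
      have := hmono (M i) (insert v (M i)) (Finset.subset_insert v (M i))
      linarith
    have hle : f O ≤ f (M i) + (k:ℝ) * (f (M (i+1)) - f (M i)) := by
      have h1 : f O ≤ f (M i ∪ O) := hmono O (M i ∪ O) Finset.subset_union_right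
      have h2 := key (M i) O
      have h3 : ∑ v' ∈ O, (f (insert v' (M i)) - f (M i)) ≤
          ∑ _v' ∈ O, (f (M (i+1)) - f (M i)) := by
        apply Finset.sum_le_sum
        intro x _
        have := hvmax x
        rw [hMv]; linarith
      rw [Finset.sum_const, nsmul_eq_mul] at h3
      have hcard : (O.card : ℝ) * (f (M (i+1)) - f (M i)) ≤
          (k:ℝ) * (f (M (i+1)) - f (M i)) := by
        apply mul_le_mul_of_nonneg_right _ hΔ
        exact_mod_cast hO
      linarith
    have hdiv : (f O - f (M i)) / (k:ℝ) ≤ f (M (i+1)) - f (M i) := by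
      rw [div_le_iff₀ hkpos]; nlinarith
    have heq : (1 - 1/(k:ℝ)) * (f O - f (M i)) =
        (f O - f (M i)) - (f O - f (M i)) / (k:ℝ) := by
      field_simp
    rw [heq]; linarith
  have h1k : (0:ℝ) ≤ 1 - 1/(k:ℝ) := by
    have : 1/(k:ℝ) ≤ 1 := by
      rw [div_le_one hkpos]; exact_mod_cast hk
    linarith
  -- iterate
  have hiter : ∀ i ≤ k, f O - f (M i) ≤ (1 - 1/(k:ℝ))^i * f O := by
    intro i
    induction i with
    | zero => intro _; simp [hM0, hf0]
    | succ n ih =>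
      intro hn
      have hn' : n < k := Nat.lt_of_succ_le hn
      have h1 := hstep n hn'
      have h2 := ih (Nat.le_of_lt hn')
      calc f O - f (M (n+1)) ≤ (1 - 1/(k:ℝ)) * (f O - f (M n)) := h1
        _ ≤ (1 - 1/(k:ℝ)) * ((1 - 1/(k:ℝ))^n * f O) :=
            mul_le_mul_of_nonneg_left h2 h1k
        _ = (1 - 1/(k:ℝ))^(n+1) * f O := by ring
  have hfin := hiter k le_rfl
  -- (1-1/k)^k ≤ 1/e
  have hexp : (1 - 1/(k:ℝ))^k ≤ 1 / Real.exp 1 := by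
    have h1 : 1 - 1/(k:ℝ) ≤ Real.exp (-(1/(k:ℝ))) := by
      linarith [Real.add_one_le_exp (-(1/(k:ℝ)))]
    have h2 : (1 - 1/(k:ℝ))^k ≤ (Real.exp (-(1/(k:ℝ))))^k :=
      pow_le_pow_left₀ h1k h1 k
    have h3 : (Real.exp (-(1/(k:ℝ))))^k = Real.exp ((k:ℝ) * (-(1/(k:ℝ)))) := by
      rw [← Real.exp_nat_mul]
    have h4 : (k:ℝ) * (-(1/(k:ℝ))) = -1 := by
      field_simp
    rw [h3, h4] at h2
    rw [Real.exp_neg] at h2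
    simpa [one_div] using h2
  have hmul : (1 - 1/(k:ℝ))^k * f O ≤ (1 / Real.exp 1) * f O :=
    mul_le_mul_of_nonneg_right hexp hO0
  linarith
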